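/- Let G be a finite set of monomials with a linear order and let A be the Barile-Macchia matching (the possible edges after Step (3) retains at most one edge per target). Then the reversed-edge graph G_I^A is acyclic: any directed cycle in G_I^A would have to alternate between reversed matching edges (which increase cardinality by 1) and ordinary edges (which decrease cardinality by 1), and no such cycle exists because along any such alternating closed walk the lcm is constant while the sequence of added/removed smallest bridges strictly decreases in the linear order. -/

import Mathlib

/-- Monomials in `N` variables, modeled as exponent vectors. -/
abbrev Mon (N : ℕ) := Fin N → ℕ

/-- lcm of a finite set of monomials: the pointwise supremum. -/
def mLcm {N : ℕ} (σ : Finset (Mon N)) : Mon N := fun i => σ.sup (fun m => m i)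

/-- `m` divides `m'`: pointwise ≤ of exponent vectors. -/
def mDvd {N : ℕ} (m m' : Mon N) : Prop := ∀ i, m i ≤ m' i

/-- `m` is a bridge of `σ`: `m ∈ σ` and removing `m` does not change the lcm. -/
def IsBridge {N : ℕ} (σ : Finset (Mon N)) (m : Mon N) : Prop :=
  m ∈ σ ∧ mLcm (σ.erase m) = mLcm σ

/-- `σ` has a bridge. -/
def HasBridge {N : ℕ} (σ : Finset (Mon N)) : Prop := ∃ m, IsBridge σ m

namespace BMAux

variable {N : ℕ}

lemma mLcm_mono {X Y : Finset (Mon N)} (h : X ⊆ Y) (i : Fin N) : mLcm X i ≤ mLcm Y i :=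
  Finset.sup_mono h

lemma mLcm_insert (a : Mon N) (X : Finset (Mon N)) (i : Fin N) :
    mLcm (insert a X) i = a i ⊔ mLcm X i := by
  simp [mLcm]

lemma mem_le_mLcm {x : Mon N} {X : Finset (Mon N)} (h : x ∈ X) (i : Fin N) :
    x i ≤ mLcm X i := Finset.le_sup (f := fun m => m i) h

/-- first component of the measure: total degree of the lcm. -/
def S (v : Finset (Mon N)) : ℕ := ∑ i, mLcm v i

lemma S_mono {X Y : Finset (Mon N)} (h : X ⊆ Y) : S X ≤ S Y :=
  Finset.sum_le_sum fun i _ => mLcm_mono h i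

lemma lcm_eq_of_S_eq {X Y : Finset (Mon N)} (h : X ⊆ Y) (hS : S X = S Y) :
    mLcm X = mLcm Y := by
  funext i
  exact (Finset.sum_eq_sum_iff_of_le (fun i _ => mLcm_mono h i)).1 hS i (Finset.mem_univ i)

/- linear order helpers, using `L` as a term -/

lemma Llt_iff (L : LinearOrder (Mon N)) {a b : Mon N} :
    L.lt a b ↔ L.le a b ∧ ¬ L.le b a := L.lt_iff_le_not_ge a b

lemma Llt_of_le_of_ne (L : LinearOrder (Mon N)) {a b : Mon N}
    (h : L.le a b) (hne : a ≠ b) : L.lt a b :=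
  (Llt_iff L).2 ⟨h, fun h' => hne (L.le_antisymm _ _ h h')⟩

lemma Llt_trans (L : LinearOrder (Mon N)) {a b c : Mon N}
    (h1 : L.lt a b) (h2 : L.lt b c) : L.lt a c := by
  obtain ⟨h1a, h1b⟩ := (Llt_iff L).1 h1
  obtain ⟨h2a, h2b⟩ := (Llt_iff L).1 h2
  exact (Llt_iff L).2 ⟨L.le_trans _ _ _ h1a h2a, fun h => h1b (L.le_trans _ _ _ h2a h)⟩

lemma Llt_irrefl (L : LinearOrder (Mon N)) (a : Mon N) : ¬ L.lt a a := by
  intro h; exact ((Llt_iff L).1 h).2 ((Llt_iff L).1 h).1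

open Classical in
noncomputable def rnk (L : LinearOrder (Mon N)) (G : Finset (Mon N)) (x : Mon N) : ℕ :=
  (G.filter fun y => L.lt y x).card

lemma rnk_lt_rnk (L : LinearOrder (Mon N)) (G : Finset (Mon N)) {b m : Mon N}
    (hb : b ∈ G) (h : L.lt b m) : rnk L G b < rnk L G m := by
  classical
  unfold rnk
  apply Finset.card_lt_card
  rw [Finset.ssubset_def]
  constructor
  · intro y hy
    simp only [Finset.mem_filter] at hy ⊢
    exact ⟨hy.1, Llt_trans L hy.2 h⟩
  · intro hsub
    have hbm : b ∈ G.filter (fun y => L.lt y m) := Finset.mem_filter.2 ⟨hb, h⟩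
    have := (Finset.mem_filter.1 (hsub hbm)).2
    exact Llt_irrefl L b this

/-- weight of a set of monomials. -/
noncomputable def fwt (L : LinearOrder (Mon N)) (G : Finset (Mon N))
    (v : Finset (Mon N)) : ℕ := ∑ x ∈ v, 2 ^ rnk L G x

lemma fwt_erase_add (L : LinearOrder (Mon N)) (G : Finset (Mon N)) {m : Mon N}
    {v : Finset (Mon N)} (h : m ∈ v) :
    fwt L G (v.erase m) + 2 ^ rnk L G m = fwt L G v :=
  Finset.sum_erase_add v _ h

/-- `v` is a source of an `A`-edge. -/
def Src (A : Set (Finset (Mon N) × Finset (Mon N))) (v : Finset (Mon N)) : Prop :=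
  ∃ t, (v, t) ∈ A

open Classical in
noncomputable def mu (L : LinearOrder (Mon N)) (G : Finset (Mon N))
    (sb : Finset (Mon N) → Mon N) (A : Set (Finset (Mon N) × Finset (Mon N)))
    (v : Finset (Mon N)) : ℕ :=
  if Src A v then fwt L G (v.erase (sb v)) else fwt L G v

open Classical in
noncomputable def tv (A : Set (Finset (Mon N) × Finset (Mon N)))
    (v : Finset (Mon N)) : ℕ :=
  if Src A v then 0 else 1

end BMAux

section Main

open BMAux

variable {N : ℕ} (G : Finset (Mon N)) (L : LinearOrder (Mon N))
  (sb : Finset (Mon N) → Mon N)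
  (A : Set (Finset (Mon N) × Finset (Mon N)))

/-- Key lemma: no vertex is simultaneously the source and the target of
edges of the Barile–Macchia matching `A`. -/
lemma bm_no_src_tgt
    (hsb : ∀ σ : Finset (Mon N), HasBridge σ →
      IsBridge σ (sb σ) ∧ ∀ m, IsBridge σ m → L.le (sb σ) m)
    (hA : ∀ e : Finset (Mon N) × Finset (Mon N),
      e ∈ A ↔ e.1 ⊆ G ∧ HasBridge e.1 ∧ e.2 = e.1.erase (sb e.1) ∧
        ∀ σ' : Finset (Mon N), σ' ⊆ G → HasBridge σ' →
          σ'.erase (sb σ') = e.2 → L.le (sb e.1) (sb σ'))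
    {ρ σ τ : Finset (Mon N)} (h1 : (ρ, σ) ∈ A) (h2 : (σ, τ) ∈ A) : False := by
  classical
  obtain ⟨hρG, hρB, hσd, hρmin⟩ := (hA _).1 h1
  obtain ⟨hσG, hσB, hτd, hσmin⟩ := (hA _).1 h2
  simp only at hσd hτd hρmin hσmin hρG hσG
  obtain ⟨hbmem, hbe⟩ := (hsb ρ hρB).1
  obtain ⟨hsmem, hse⟩ := (hsb σ hσB).1
  -- abbreviations
  have hlσρ : mLcm σ = mLcm ρ := by rw [hσd]; exact hbe
  have hbσ : sb ρ ∉ σ := by rw [hσd]; exact Finset.notMem_erase _ _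
  have hρins : insert (sb ρ) σ = ρ := by rw [hσd]; exact Finset.insert_erase hbmem
  have hbs : sb ρ ≠ sb σ := fun h => hbσ (h ▸ hsmem)
  have hlτσ : mLcm τ = mLcm σ := by rw [hτd]; exact hse
  have hτsub : τ ⊆ σ := by rw [hτd]; exact Finset.erase_subset _ _
  -- sb σ is a bridge of ρ
  have hbrρs : IsBridge ρ (sb σ) := by
    have hmem : sb σ ∈ ρ := by rw [← hρins]; exact Finset.mem_insert_of_mem hsmem
    refine ⟨hmem, ?_⟩
    have h1' := Finset.erase_insert_of_ne (s := σ) hbs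
    rw [hρins] at h1'
    rw [h1']
    funext i
    rw [mLcm_insert, congrFun hse i, ← mLcm_insert, hρins]
  have hlebs : L.le (sb ρ) (sb σ) := (hsb ρ hρB).2 _ hbrρs
  have hblts : L.lt (sb ρ) (sb σ) := Llt_of_le_of_ne L hlebs hbs
  -- the competitor ρ' = insert (sb ρ) τ
  have hbτ : sb ρ ∉ τ := fun h => hbσ (hτsub h)
  have hρ'G : insert (sb ρ) τ ⊆ G :=
    Finset.insert_subset (hρG hbmem) (hτsub.trans hσG)
  have hbleL : ∀ i, sb ρ i ≤ mLcm τ i := fun i => by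
    have h1 : sb ρ i ≤ mLcm ρ i := mem_le_mLcm hbmem i
    rw [congrFun hlτσ i, congrFun hlσρ i]; exact h1
  have hlρ'τ : mLcm (insert (sb ρ) τ) = mLcm τ := funext fun i => by
    rw [mLcm_insert]; exact sup_eq_right.2 (hbleL i)
  have hbrρ'b : IsBridge (insert (sb ρ) τ) (sb ρ) :=
    ⟨Finset.mem_insert_self _ _, by rw [Finset.erase_insert hbτ]; exact hlρ'τ.symm⟩
  have hρ'B : HasBridge (insert (sb ρ) τ) := ⟨_, hbrρ'b⟩
  obtain ⟨hmmem, hme⟩ := (hsb _ hρ'B).1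
  have hmleb : L.le (sb (insert (sb ρ) τ)) (sb ρ) := (hsb _ hρ'B).2 _ hbrρ'b
  by_cases hmb : sb (insert (sb ρ) τ) = sb ρ
  · -- ρ' is a genuine competitor at τ, contradicting minimality of sb σ
    have hcand : (insert (sb ρ) τ).erase (sb (insert (sb ρ) τ)) = τ := by
      rw [hmb, Finset.erase_insert hbτ]
    have hge := hσmin (insert (sb ρ) τ) hρ'G hρ'B hcand
    -- L.le (sb σ) (sb ρ') with sb ρ' = sb ρ, but sb ρ < sb σ
    rw [hmb] at hge
    exact hbs (L.le_antisymm _ _ hlebs hge)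
  · -- m := sb ρ' lies in τ and is a bridge of ρ smaller than sb ρ
    have hmτ : sb (insert (sb ρ) τ) ∈ τ := by
      rcases Finset.mem_insert.1 hmmem with h | h
      · exact absurd h hmb
      · exact h
    have hms : sb (insert (sb ρ) τ) ≠ sb σ := by
      intro h
      rw [h, hτd] at hmτ
      exact Finset.notMem_erase _ _ hmτ
    have hσins : insert (sb σ) τ = σ := by rw [hτd]; exact Finset.insert_erase hsmem
    have hkey : mLcm (insert (sb ρ) (τ.erase (sb (insert (sb ρ) τ)))) = mLcm τ := by
      have h' : (insert (sb ρ) τ).erase (sb (insert (sb ρ) τ)) =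
          insert (sb ρ) (τ.erase (sb (insert (sb ρ) τ))) :=
        Finset.erase_insert_of_ne (fun h => hmb h.symm)
      rw [← h', hme, hlρ'τ]
    have hbrρm : IsBridge ρ (sb (insert (sb ρ) τ)) := by
      have hmσ : sb (insert (sb ρ) τ) ∈ σ := by
        rw [← hσins]; exact Finset.mem_insert_of_mem hmτ
      have hmρ : sb (insert (sb ρ) τ) ∈ ρ := by
        have h := Finset.mem_insert_of_mem (b := sb ρ) hmσ
        rw [hρins] at h
        exact h
      refine ⟨hmρ, ?_⟩
      have hστ' := Finset.erase_insert_of_ne (s := τ)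
        (a := sb σ) (b := sb (insert (sb ρ) τ)) (fun h => hms h.symm)
      rw [hσins] at hστ'
      have h1' := Finset.erase_insert_of_ne (s := σ)
        (a := sb ρ) (b := sb (insert (sb ρ) τ)) (fun h => hmb h.symm)
      rw [hρins, hστ'] at h1'
      rw [h1']
      funext i
      rw [mLcm_insert, mLcm_insert]
      have h2 := congrFun hkey i
      rw [mLcm_insert] at h2
      have h3 : sb σ i ≤ mLcm σ i := mem_le_mLcm hsmem i
      rw [sup_left_comm, h2]
      -- goal : sb σ i ⊔ mLcm τ i = mLcm ρ i
      rw [congrFun hlτσ i]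
      rw [show mLcm ρ i = mLcm σ i from (congrFun hlσρ i).symm]
      exact sup_eq_right.2 h3
    have hgem := (hsb ρ hρB).2 _ hbrρm
    exact hmb (L.le_antisymm _ _ hmleb hgem)

end Main

/-- Acyclicity of the Barile–Macchia matching (Theorem 2.11 of Chau–Kara):
let `sb` pick the least bridge with respect to a linear order `L`, and let `A`
be the Barile–Macchia matching, i.e. the set of possible edges
`(σ, σ \ sbridge σ)` retained by Step (3): for each target exactly the edge
whose smallest bridge is `L`-least.  Then the reversed-edge graph `G_I^A`
is acyclic: it has no nonempty directed closed walk. -/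
theorem bm_matching_acyclic {N : ℕ} (G : Finset (Mon N))
    (L : LinearOrder (Mon N)) (sb : Finset (Mon N) → Mon N)
    (hsb : ∀ σ : Finset (Mon N), HasBridge σ →
      IsBridge σ (sb σ) ∧ ∀ m, IsBridge σ m → L.le (sb σ) m)
    (A : Set (Finset (Mon N) × Finset (Mon N)))
    (hA : ∀ e : Finset (Mon N) × Finset (Mon N),
      e ∈ A ↔ e.1 ⊆ G ∧ HasBridge e.1 ∧ e.2 = e.1.erase (sb e.1) ∧
        ∀ σ' : Finset (Mon N), σ' ⊆ G → HasBridge σ' →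
          σ'.erase (sb σ') = e.2 → L.le (sb e.1) (sb σ')) :
    ∀ σ : Finset (Mon N), ¬ Relation.TransGen
      (fun τ τ' : Finset (Mon N) =>
        (τ ⊆ G ∧ τ' ⊆ τ ∧ τ'.card + 1 = τ.card ∧ (τ, τ') ∉ A) ∨ (τ', τ) ∈ A)
      σ σ := by
  classical
  open BMAux in
  -- the lexicographic measure: mLcm degree, then weighted set measure, then source flag
  set μ : Finset (Mon N) → ℕ := fun v => mu L G sb A v with hμdef
  set T : Finset (Mon N) → ℕ := fun v => tv A v with hTdef
  -- "x is strictly smaller than y"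
  set r : Finset (Mon N) → Finset (Mon N) → Prop := fun x y =>
    S x < S y ∨ (S x = S y ∧ (μ x < μ y ∨ (μ x = μ y ∧ T x < T y))) with hrdef
  have hstep : ∀ x y : Finset (Mon N),
      ((x ⊆ G ∧ y ⊆ x ∧ y.card + 1 = x.card ∧ (x, y) ∉ A) ∨ (y, x) ∈ A) → r y x := by
    intro x y hR
    rcases hR with ⟨hxG, hsub, hcard, hnA⟩ | hup
    · -- down step: y = x.erase m
      have hne : y ≠ x := by intro h; rw [h] at hcard; omega
      obtain ⟨m, hm, hmy⟩ := Finset.exists_of_ssubset (lt_of_le_of_ne hsub hne)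
      have hy : y = x.erase m := by
        apply Finset.eq_of_subset_of_card_le (Finset.subset_erase.2 ⟨hsub, hmy⟩)
        rw [Finset.card_erase_of_mem hm]
        omega
      subst hy
      have hS1 : S (x.erase m) ≤ S x := S_mono (Finset.erase_subset _ _)
      rcases eq_or_lt_of_le hS1 with hSeq | hSlt
      · right
        refine ⟨hSeq, Or.inl ?_⟩
        -- μ (x.erase m) < μ x
        have hf1 : fwt L G (x.erase m) + 2 ^ rnk L G m = fwt L G x := fwt_erase_add L G hm
        have hμy : μ (x.erase m) ≤ fwt L G (x.erase m) := by
          rw [hμdef]; simp only [mu]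
          split
          · next hS' =>
              obtain ⟨t2, ht2⟩ := hS'
              obtain ⟨_, hB2, _, _⟩ := (hA _).1 ht2
              have hmem2 := ((hsb _ hB2).1).1
              exact Nat.le.intro (fwt_erase_add L G hmem2)
          · exact le_rfl
        by_cases hSx : Src A x
        · obtain ⟨t0, ht0⟩ := hSx
          obtain ⟨hxG', hxB, ht0d, _⟩ := (hA _).1 ht0
          simp only at ht0d
          have hbx := (hsb x hxB).1
          have hnbm : sb x ≠ m := by
            intro h
            apply hnA
            rw [← h, ← ht0d]
            exact ht0
          have hlcmeq : mLcm (x.erase m) = mLcm x :=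
            lcm_eq_of_S_eq (Finset.erase_subset _ _) hSeq
          have hbrm : IsBridge x m := ⟨hm, hlcmeq⟩
          have hle := (hsb x hxB).2 m hbrm
          have hlt : L.lt (sb x) m := Llt_of_le_of_ne L hle hnbm
          have hr1 : rnk L G (sb x) < rnk L G m := rnk_lt_rnk L G (hxG hbx.1) hlt
          have hf2 : fwt L G (x.erase (sb x)) + 2 ^ rnk L G (sb x) = fwt L G x :=
            fwt_erase_add L G hbx.1
          have hμx : μ x = fwt L G (x.erase (sb x)) := by
            rw [hμdef]; simp only [mu]
            rw [if_pos ⟨t0, ht0⟩]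
          have hp : 2 ^ rnk L G (sb x) < 2 ^ rnk L G m :=
            Nat.pow_lt_pow_right one_lt_two hr1
          omega
        · have hμx : μ x = fwt L G x := by
            rw [hμdef]; simp only [mu]
            rw [if_neg hSx]
          have hp : 0 < 2 ^ rnk L G m := Nat.pow_pos (by norm_num)
          omega
      · exact Or.inl hSlt
    · -- up step: (y, x) ∈ A, moving from target x to source y
      obtain ⟨hyG, hyB, hxd, hmin⟩ := (hA _).1 hup
      simp only at hxd
      have hby := (hsb y hyB).1
      have hlcm : mLcm x = mLcm y := by rw [hxd]; exact hby.2
      have hSeq : S y = S x := by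
        unfold S; rw [hlcm]
      have hSrcy : Src A y := ⟨x, hup⟩
      have hnSrcx : ¬ Src A x := by
        rintro ⟨t1, ht1⟩
        exact bm_no_src_tgt G L sb A hsb hA hup ht1
      have hμy : μ y = fwt L G x := by
        rw [hμdef]; simp only [mu]
        rw [if_pos hSrcy, ← hxd]
      have hμx : μ x = fwt L G x := by
        rw [hμdef]; simp only [mu]
        rw [if_neg hnSrcx]
      have hTy : T y = 0 := by rw [hTdef]; simp only [tv]; rw [if_pos hSrcy]
      have hTx : T x = 1 := by rw [hTdef]; simp only [tv]; rw [if_neg hnSrcx]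
      right
      exact ⟨hSeq, Or.inr ⟨by rw [hμy, hμx], by rw [hTy, hTx]; omega⟩⟩
  intro σ0 hcyc
  have htrans : Transitive (fun x y : Finset (Mon N) => r y x) := by
    intro a b c h1 h2
    rw [hrdef] at h1 h2 ⊢
    rcases h1 with h1 | ⟨e1, h1⟩ <;> rcases h2 with h2 | ⟨e2, h2⟩
    · exact Or.inl (lt_trans h2 h1)
    · exact Or.inl (by omega)
    · exact Or.inl (by omega)
    · refine Or.inr ⟨by omega, ?_⟩
      rcases h1 with h1 | ⟨f1, h1⟩ <;> rcases h2 with h2 | ⟨f2, h2⟩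
      · exact Or.inl (by omega)
      · exact Or.inl (by omega)
      · exact Or.inl (by omega)
      · exact Or.inr ⟨by omega, by omega⟩
  have h2 : Relation.TransGen (fun x y : Finset (Mon N) => r y x) σ0 σ0 :=
    Relation.TransGen.mono (fun a b hab => hstep a b hab) _ _ hcyc
  rw [@Relation.transGen_eq_self _ (fun x y : Finset (Mon N) => r y x) ⟨fun _ _ _ h h' => htrans h h'⟩] at h2
  rw [hrdef] at h2
  omega
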